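/- Assume char K ≠ 2 and h_{e_i}² = 1 for all 1 ≤ i ≤ n, and let π be a compatible permutation with (q,a) satisfying π² = Id. Suppose there exist c_1,…,c_n ∈ K with c_i · c_{π(i)} = h_{e_i} for all i and q_π · ∏_{1 ≤ i ≤ n} c_i^{a_i−1} = 1. If the sets I_1 = {i : π(i) = i, h_{e_i} = 1, a_i even} and I_3 = {i : π(i) = i, h_{e_i} = −1, a_i even} are both empty, then the cardinality of J_3 = {i : π(i) ≠ i, h_{e_i} = −1, a_i even} is divisible by 4. -/

import Mathlib

open scoped BigOperators

noncomputable section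

/-- The structure coefficient `q^⟨u|v⟩ = ∏_{i<j} q_{ij}^{u_j v_i}` for `u v : Fin n → ℤ`. -/
def qpowZ {K : Type*} [Field K] {n : ℕ} (q : Fin n → Fin n → K) (u v : Fin n → ℤ) : K :=
  ∏ i : Fin n, ∏ j : Fin n, if i < j then q i j ^ (u j * v i) else 1

/-- The `i`-th standard basis vector of `ℤ^n`. -/
def eZ {n : ℕ} (i : Fin n) : Fin n → ℤ := fun t => if t = i then 1 else 0

/-- `π` is a compatible permutation with `(q, a)`. -/
def Compatible {K : Type*} [Field K] {n : ℕ} (q : Fin n → Fin n → K) (a : Fin n → ℕ)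
    (π : Equiv.Perm (Fin n)) : Prop :=
  (∀ i, a (π i) = a i) ∧ (∀ i j, q (π i) (π j) = q j i)

/-- `h_{e_i} = ∏_{1 ≤ j ≤ n} q_{ij}^{a_j - 1}`. -/
def hei {K : Type*} [Field K] {n : ℕ} (q : Fin n → Fin n → K) (a : Fin n → ℕ)
    (i : Fin n) : K :=
  ∏ j : Fin n, q i j ^ (a j - 1)

/-- `q_π = ∏_{j<k} (q^⟨π·e_k|π·e_j⟩)^{(a_k-1)(a_j-1)}`. -/
def qPi {K : Type*} [Field K] {n : ℕ} (q : Fin n → Fin n → K) (a : Fin n → ℕ)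
    (π : Equiv.Perm (Fin n)) : K :=
  ∏ j : Fin n, ∏ k : Fin n,
    if j < k then (qpowZ q (eZ (π k)) (eZ (π j))) ^ ((a k - 1) * (a j - 1)) else 1

/-- `qpowZ` on standard basis vectors. -/
lemma qpowZ_e {K : Type*} [Field K] {n : ℕ} (q : Fin n → Fin n → K) (x y : Fin n) :
    qpowZ q (eZ x) (eZ y) = if y < x then q y x else 1 := by
  unfold qpowZ eZ
  rw [Finset.prod_eq_single y (fun i _ hi => Finset.prod_eq_one fun l _ => by simp [hi])
    (by simp)]
  rw [Finset.prod_eq_single x (fun l _ hl => by simp [hl]) (by simp)]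
  by_cases h : y < x <;> simp [h]

theorem stmt17 {K : Type*} [Field K] {n : ℕ} (hn : 1 ≤ n)
    (hchar : ringChar K ≠ 2)
    (q : Fin n → Fin n → K) (a : Fin n → ℕ)
    (hq0 : ∀ i j, q i j ≠ 0) (hqii : ∀ i, q i i = 1)
    (hqsym : ∀ i j, q i j * q j i = 1) (ha : ∀ i, 2 ≤ a i)
    (hh : ∀ i, (hei q a i) ^ 2 = 1)
    (π : Equiv.Perm (Fin n)) (hcomp : Compatible q a π)
    (hπ2 : ∀ i, π (π i) = i)
    (c : Fin n → K)
    (hc : ∀ i, c i * c (π i) = hei q a i)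
    (hcprod : qPi q a π * ∏ i : Fin n, c i ^ (a i - 1) = 1)
    (hI1 : {i : Fin n | π i = i ∧ hei q a i = 1 ∧ Even (a i)} = ∅)
    (hI3 : {i : Fin n | π i = i ∧ hei q a i = -1 ∧ Even (a i)} = ∅) :
    4 ∣ ({i : Fin n | π i ≠ i ∧ hei q a i = -1 ∧ Even (a i)}.ncard) := by
  classical
  obtain ⟨hca, hcq⟩ := hcomp
  have hne : (-1 : K) ≠ 1 := Ring.neg_one_ne_one_of_char_ne_two hchar
  have hpm : ∀ i, hei q a i = 1 ∨ hei q a i = -1 := by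
    intro i
    have h2 := hh i
    rw [sq] at h2
    exact mul_self_eq_one_iff.mp h2
  have hodd : ∀ i, π i = i → ¬ Even (a i) := by
    intro i hfi hev
    rcases hpm i with h1 | h1
    · exact Set.eq_empty_iff_forall_notMem.mp hI1 i ⟨hfi, h1, hev⟩
    · exact Set.eq_empty_iff_forall_notMem.mp hI3 i ⟨hfi, h1, hev⟩
  have hwev : ∀ i, π i = i → Even (a i - 1) :=
    fun i hfi => Nat.Odd.sub_odd (Nat.not_even_iff_odd.mp (hodd i hfi)) odd_one
  have hsq_pow : ∀ (x : K) (e : ℕ), x * x = 1 → Even e → x ^ e = 1 := by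
    intro x e hx he
    obtain ⟨t, ht⟩ := he
    rw [ht, ← two_mul, pow_mul, sq, hx, one_pow]
  have hqfix : ∀ i j, π i = i → π j = j → q i j * q i j = 1 := by
    intro i j hfi hfj
    have h1 : q i j = q j i := by have := hcq i j; rwa [hfi, hfj] at this
    nth_rewrite 2 [h1]
    exact hqsym i j
  have hπmul : ∀ i, hei q a (π i) * hei q a i = 1 := by
    intro i
    have h1 : hei q a (π i) = ∏ j, q j i ^ (a j - 1) := by
      rw [show hei q a (π i) = ∏ j, q (π i) j ^ (a j - 1) from rfl,
        ← Equiv.prod_comp π (fun j => q (π i) j ^ (a j - 1))]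
      exact Finset.prod_congr rfl fun j _ => by rw [hcq i j, hca j]
    rw [h1, show hei q a i = ∏ j, q i j ^ (a j - 1) from rfl, ← Finset.prod_mul_distrib]
    exact Finset.prod_eq_one fun j _ => by
      rw [← mul_pow, mul_comm (q j i) (q i j), hqsym, one_pow]
  have hπh : ∀ i, hei q a (π i) = hei q a i := by
    intro i
    have h0 : hei q a i ≠ 0 := by
      rcases hpm i with h | h <;> rw [h] <;> simp
    have h2 := hh i
    rw [sq] at h2
    exact mul_right_cancel₀ h0 ((hπmul i).trans h2.symm)
  have hfix1 : ∀ i, π i = i → hei q a i = 1 := by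
    intro i hfi
    rw [show hei q a i = ∏ j, q i j ^ (a j - 1) from rfl,
      ← Finset.prod_filter_mul_prod_filter_not Finset.univ (fun j => π j = j)
        (fun j => q i j ^ (a j - 1))]
    have h1 : ∏ j ∈ Finset.univ.filter (fun j => π j = j), q i j ^ (a j - 1) = 1 := by
      apply Finset.prod_eq_one
      intro j hj
      have hfj := (Finset.mem_filter.mp hj).2
      by_cases hij : j = i
      · subst hij; rw [hqii, one_pow]
      · exact hsq_pow _ _ (hqfix i j hfi hfj) (hwev j hfj)
    have h2 : ∏ j ∈ Finset.univ.filter (fun j => ¬ π j = j), q i j ^ (a j - 1) = 1 := by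
      refine Finset.prod_involution (fun j _ => π j) ?_ ?_ ?_ ?_
      · intro j hj
        have e1 : q i (π j) = q j i := by have := hcq i j; rwa [hfi] at this
        rw [e1, hca j, ← mul_pow, hqsym, one_pow]
      · intro j hj _
        exact (Finset.mem_filter.mp hj).2
      · intro j hj
        simp only [Finset.mem_filter, Finset.mem_univ, true_and] at hj ⊢
        exact fun h => hj (h.symm.trans (hπ2 j))
      · intro j hj
        exact hπ2 j
    rw [h1, h2, one_mul]
  -- q_π = 1
  have hqPi : qPi q a π = 1 := by
    have step1 : qPi q a π = ∏ x : Fin n × Fin n,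
        (if x.1 < x.2 ∧ π x.1 < π x.2 then q x.2 x.1 ^ ((a x.2 - 1) * (a x.1 - 1)) else 1) := by
      rw [Fintype.prod_prod_type]
      unfold qPi
      refine Finset.prod_congr rfl fun j _ => Finset.prod_congr rfl fun k _ => ?_
      rw [qpowZ_e]
      by_cases h1 : j < k
      · by_cases h2 : π j < π k
        · rw [if_pos h1, if_pos h2, if_pos ⟨h1, h2⟩, hcq j k]
        · rw [if_pos h1, if_neg h2, if_neg (by tauto), one_pow]
      · rw [if_neg h1, if_neg (by tauto)]
    rw [step1, ← Finset.prod_filter]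
    refine Finset.prod_involution (fun x _ => (π x.1, π x.2)) ?_ ?_ ?_ ?_
    · intro x hx
      show q x.2 x.1 ^ ((a x.2 - 1) * (a x.1 - 1)) *
        q (π x.2) (π x.1) ^ ((a (π x.2) - 1) * (a (π x.1) - 1)) = 1
      rw [hcq x.2 x.1, hca x.2, hca x.1, ← mul_pow, hqsym, one_pow]
    · intro x hx hfx heq
      apply hfx
      have h1 : π x.1 = x.1 := congrArg Prod.fst heq
      have h2 : π x.2 = x.2 := congrArg Prod.snd heq
      exact hsq_pow _ _ (hqfix x.2 x.1 h2 h1) (Even.mul_right (hwev x.2 h2) _)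
    · intro x hx
      simp only [Finset.mem_filter, Finset.mem_univ, true_and] at hx ⊢
      exact ⟨hx.2, by rw [hπ2 x.1, hπ2 x.2]; exact hx.1⟩
    · intro x hx
      show (π (π x.1), π (π x.2)) = x
      rw [hπ2 x.1, hπ2 x.2]
  have hP : (∏ i : Fin n, c i ^ (a i - 1)) = 1 := by
    rwa [hqPi, one_mul] at hcprod
  -- split the product over fixed points and the two "halves" of moved points
  have split1 : (∏ i : Fin n, c i ^ (a i - 1)) =
      (∏ i ∈ Finset.univ.filter (fun i => π i = i), c i ^ (a i - 1)) *
      (∏ i ∈ Finset.univ.filter (fun i => ¬ π i = i), c i ^ (a i - 1)) :=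
    (Finset.prod_filter_mul_prod_filter_not Finset.univ (fun i => π i = i) _).symm
  have split2 : (∏ i ∈ Finset.univ.filter (fun i => ¬ π i = i), c i ^ (a i - 1)) =
      (∏ i ∈ (Finset.univ.filter (fun i => ¬ π i = i)).filter (fun i => i < π i),
        c i ^ (a i - 1)) *
      (∏ i ∈ (Finset.univ.filter (fun i => ¬ π i = i)).filter (fun i => ¬ i < π i),
        c i ^ (a i - 1)) :=
    (Finset.prod_filter_mul_prod_filter_not _ (fun i => i < π i) _).symm
  have efix : (∏ i ∈ Finset.univ.filter (fun i => π i = i), c i ^ (a i - 1)) = 1 := by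
    apply Finset.prod_eq_one
    intro i hi
    have hfi := (Finset.mem_filter.mp hi).2
    have hc2 : c i * c i = 1 := by
      have h := hc i
      rw [hfi, hfix1 i hfi] at h
      exact h
    exact hsq_pow _ _ hc2 (hwev i hfi)
  have ebij : (∏ i ∈ (Finset.univ.filter (fun i => ¬ π i = i)).filter (fun i => ¬ i < π i),
      c i ^ (a i - 1)) =
      ∏ i ∈ (Finset.univ.filter (fun i => ¬ π i = i)).filter (fun i => i < π i),
        c (π i) ^ (a i - 1) := by
    refine Finset.prod_nbij' π π ?_ ?_ ?_ ?_ ?_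
    · intro x hx
      simp only [Finset.mem_filter, Finset.mem_univ, true_and] at hx ⊢
      obtain ⟨hmx, hnlt⟩ := hx
      refine ⟨fun h => hmx ((h.symm.trans (hπ2 x)).symm ▸ rfl), ?_⟩
      · rw [hπ2 x]
        exact lt_of_le_of_ne (not_lt.mp hnlt) hmx
    · intro x hx
      simp only [Finset.mem_filter, Finset.mem_univ, true_and] at hx ⊢
      obtain ⟨hmx, hlt⟩ := hx
      refine ⟨fun h => hmx ((h.symm.trans (hπ2 x)).symm ▸ rfl), ?_⟩
      · rw [hπ2 x]
        exact not_lt.mpr hlt.le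
    · intro x _; exact hπ2 x
    · intro x _; exact hπ2 x
    · intro x _
      rw [hπ2 x, hca x]
  have emid : (∏ i ∈ (Finset.univ.filter (fun i => ¬ π i = i)).filter (fun i => i < π i),
      c i ^ (a i - 1)) *
      (∏ i ∈ (Finset.univ.filter (fun i => ¬ π i = i)).filter (fun i => ¬ i < π i),
        c i ^ (a i - 1)) =
      (-1 : K) ^ ((((Finset.univ.filter (fun i => ¬ π i = i)).filter (fun i => i < π i)).filter
        (fun i => hei q a i = -1 ∧ Even (a i))).card) := by
    rw [ebij, ← Finset.prod_mul_distrib]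
    have hterm : ∀ i ∈ (Finset.univ.filter (fun i => ¬ π i = i)).filter (fun i => i < π i),
        c i ^ (a i - 1) * c (π i) ^ (a i - 1) =
        (if hei q a i = -1 ∧ Even (a i) then (-1 : K) else 1) := by
      intro i _
      rw [← mul_pow, hc i]
      rcases hpm i with h1 | h1
      · rw [if_neg (fun h => hne (h1.symm.trans h.1).symm), h1, one_pow]
      · by_cases hev : Even (a i)
        · rw [if_pos ⟨h1, hev⟩, h1,
            Odd.neg_one_pow (Nat.Even.sub_odd (le_trans one_le_two (ha i)) hev odd_one)]
        · rw [if_neg (fun h => hev h.2), h1,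
            Even.neg_one_pow (Nat.Odd.sub_odd (Nat.not_even_iff_odd.mp hev) odd_one)]
    rw [Finset.prod_congr rfl hterm, Finset.prod_ite, Finset.prod_const, Finset.prod_const,
      one_pow, mul_one]
  have h5 : (-1 : K) ^ ((((Finset.univ.filter (fun i => ¬ π i = i)).filter (fun i => i < π i)).filter
      (fun i => hei q a i = -1 ∧ Even (a i))).card) = 1 := by
    rw [← emid, ← split2, ← hP, split1, efix, one_mul]
  have hkeven : Even ((((Finset.univ.filter (fun i => ¬ π i = i)).filter (fun i => i < π i)).filter
      (fun i => hei q a i = -1 ∧ Even (a i))).card) :=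
    (neg_one_pow_eq_one_iff_even hne).mp h5
  -- now the cardinality computation
  have hncard : ({i : Fin n | π i ≠ i ∧ hei q a i = -1 ∧ Even (a i)}.ncard)
      = (Finset.univ.filter (fun i => ¬ π i = i ∧ (hei q a i = -1 ∧ Even (a i)))).card := by
    rw [← Set.ncard_coe_finset]
    congr 1
    ext i
    simp [Finset.mem_filter]
  have hsplitcard :
      (Finset.univ.filter (fun i => ¬ π i = i ∧ (hei q a i = -1 ∧ Even (a i)))).card
      = ((Finset.univ.filter (fun i => ¬ π i = i ∧ (hei q a i = -1 ∧ Even (a i)))).filter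
          (fun i => i < π i)).card
      + ((Finset.univ.filter (fun i => ¬ π i = i ∧ (hei q a i = -1 ∧ Even (a i)))).filter
          (fun i => ¬ i < π i)).card :=
    (Finset.card_filter_add_card_filter_not (fun i => i < π i)).symm
  have hc1 : ((Finset.univ.filter (fun i => ¬ π i = i ∧ (hei q a i = -1 ∧ Even (a i)))).filter
        (fun i => i < π i))
      = (((Finset.univ.filter (fun i => ¬ π i = i)).filter (fun i => i < π i)).filter
        (fun i => hei q a i = -1 ∧ Even (a i))) := by
    ext i
    simp only [Finset.mem_filter, Finset.mem_univ, true_and]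
    tauto
  have hc2 : ((Finset.univ.filter (fun i => ¬ π i = i ∧ (hei q a i = -1 ∧ Even (a i)))).filter
        (fun i => ¬ i < π i)).card
      = ((Finset.univ.filter (fun i => ¬ π i = i ∧ (hei q a i = -1 ∧ Even (a i)))).filter
        (fun i => i < π i)).card := by
    apply Finset.card_nbij' π π
    · intro x hx
      simp only [Finset.mem_coe, Finset.mem_filter, Finset.mem_univ, true_and] at hx ⊢
      obtain ⟨⟨hmx, hh1, hev⟩, hnlt⟩ := hx
      refine ⟨⟨fun h => hmx ((h.symm.trans (hπ2 x)).symm ▸ rfl), ?_, ?_⟩, ?_⟩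
      · rw [hπh x]; exact hh1
      · rw [hca x]; exact hev
      · rw [hπ2 x]
        exact lt_of_le_of_ne (not_lt.mp hnlt) hmx
    · intro x hx
      simp only [Finset.mem_coe, Finset.mem_filter, Finset.mem_univ, true_and] at hx ⊢
      obtain ⟨⟨hmx, hh1, hev⟩, hlt⟩ := hx
      refine ⟨⟨fun h => hmx ((h.symm.trans (hπ2 x)).symm ▸ rfl), ?_, ?_⟩, ?_⟩
      · rw [hπh x]; exact hh1
      · rw [hca x]; exact hev
      · rw [hπ2 x]
        exact not_lt.mpr hlt.le
    · intro x _; exact hπ2 x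
    · intro x _; exact hπ2 x
  rw [hncard, hsplitcard, hc2, hc1]
  obtain ⟨t, ht⟩ := hkeven
  omega
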